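/- Consider the discrete-time affine system x(k+1) = A x(k) + B̄ ū(k) + H ε(k) + L̄, ȳ(k) = C̄ x(k) + L_y with A ∈ ℝ^{n×n}, B̄ ∈ ℝ^{n×m}, H ∈ ℝ^{n×1}, C̄ ∈ ℝ^{p×n}, L̄ ∈ ℝ^n, L_y ∈ ℝ^p, and assume the pair (A, [B̄ H]) is controllable. Let (ū^d, ε^d, ȳ^d) be a length-T trajectory of this system, and let û^d denote the combined input signal obtained by stacking ū^d(k) and ε^d(k) into a vector in ℝ^{m+1} at each time k. Let L ≥ 1. If û^d is Hankel exciting of order L + n + 1, then for every length-L trajectory (ū, ε, ȳ) of the system there exists ḡ ∈ ℝ^{T−L+1} such that 𝓗_L(ū^d) ḡ = col(ū), 𝓗_L(ε^d) ḡ = col(ε), 𝓗_L(ȳ^d) ḡ = col(ȳ), and 1ᵀ ḡ = 1 (where 1 is the all-ones vector in ℝ^{T−L+1}). -/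

import Mathlib

open Matrix

section Aux
open Polynomial


lemma full_row_rank_surj {R C : Type} [Fintype R] [Fintype C] [DecidableEq R]
    (M : Matrix R C ℝ) (h : M.rank = Fintype.card R) : Function.Surjective M.mulVec := by
  have h1 : LinearMap.range M.mulVecLin = ⊤ := by
    apply Submodule.eq_top_of_finrank_eq
    rw [← Matrix.rank, h, Module.finrank_fintype_fun_eq_card]
  intro b
  have := h1 ▸ LinearMap.mem_range (f := M.mulVecLin) (x := b)
  exact this.mp trivial |>.imp fun g hg => hg

lemma surj_vecMul_zero {R C : Type} [Fintype R] [Fintype C] (M : Matrix R C ℝ)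
    (h : Function.Surjective M.mulVec) {v : R → ℝ} (hv : v ᵥ* M = 0) : v = 0 := by
  obtain ⟨g, hg⟩ := h v
  have h2 : v ⬝ᵥ v = v ⬝ᵥ (M *ᵥ g) := by rw [hg]
  rw [Matrix.dotProduct_mulVec, hv, zero_dotProduct] at h2
  exact dotProduct_self_eq_zero.mp h2

lemma vecMul_inj_rank {R C : Type} [Fintype R] [Fintype C] [DecidableEq C]
    (M : Matrix R C ℝ) (h : ∀ v : R → ℝ, v ᵥ* M = 0 → v = 0) : M.rank = Fintype.card R := by
  rw [← Matrix.rank_transpose]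
  have hinj : Function.Injective Mᵀ.mulVecLin := by
    rw [← LinearMap.ker_eq_bot, LinearMap.ker_eq_bot']
    intro v hv
    apply h
    rw [← Matrix.mulVec_transpose]
    exact hv
  rw [Matrix.rank, LinearMap.finrank_range_of_inj hinj, Module.finrank_fintype_fun_eq_card]

lemma poly_facts {n : ℕ} (A : Matrix (Fin n) (Fin n) ℝ) :
    ∃ a : ℕ → ℝ, a (n+1) = 1 ∧
      (∑ i ∈ Finset.range (n+2), a i • A ^ i = 0) ∧
      (∑ i ∈ Finset.range (n+2), a i = 0) ∧
      (∑ i ∈ Finset.range (n+2), a i • (∑ l ∈ Finset.range i, A ^ l) = 0) := by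
  set p := A.charpoly with hp
  set q := p * (X - C 1) with hq
  have hpm : p.Monic := A.charpoly_monic
  have hqm : q.Monic := hpm.mul (monic_X_sub_C 1)
  have hpd : p.natDegree = n := A.charpoly_natDegree_eq_dim.trans (by simp)
  have hqd : q.natDegree = n + 1 := by
    rw [hq, hpm.natDegree_mul (monic_X_sub_C 1), hpd, natDegree_X_sub_C]
  have hp0 : (aeval A) p = 0 := Matrix.aeval_self_charpoly A
  have hev1 : q.eval 1 = 0 := by rw [hq, eval_mul]; simp
  have hsum1 : q.eval 1 = ∑ i ∈ Finset.range (n+2), q.coeff i := by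
    have h1 : q.eval 1 = ∑ i ∈ Finset.range (n+2), q.coeff i • (1:ℝ) ^ i :=
      eval_eq_sum_range' (by omega) 1
    simpa using h1
  refine ⟨fun i => q.coeff i, ?_, ?_, ?_, ?_⟩
  · rw [← hqd]; exact hqm
  · have h1 : (aeval A) q = ∑ i ∈ Finset.range (n+2), q.coeff i • A ^ i :=
      aeval_eq_sum_range' (by omega) A
    rw [← h1, hq, _root_.map_mul, hp0, zero_mul]
  · rw [← hsum1, hev1]
  · have key : (∑ i ∈ Finset.range (n+2), C (q.coeff i) * (∑ l ∈ Finset.range i, (X:ℝ[X]) ^ l)) = p := by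
      have hne : (X - C (1:ℝ)) ≠ 0 := X_sub_C_ne_zero 1
      apply mul_right_cancel₀ hne
      rw [Finset.sum_mul]
      have hterm : ∀ i ∈ Finset.range (n+2),
          C (q.coeff i) * (∑ l ∈ Finset.range i, (X:ℝ[X]) ^ l) * (X - C 1)
            = C (q.coeff i) * X ^ i - C (q.coeff i) := by
        intro i _
        rw [mul_assoc, show (X - C (1:ℝ)) = X - 1 by rw [C_1], geom_sum_mul, mul_sub, mul_one]
      rw [Finset.sum_congr rfl hterm, Finset.sum_sub_distrib, ← hq]
      have h2 : (∑ i ∈ Finset.range (n+2), C (q.coeff i) * X ^ i) = q := by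
        conv_rhs => rw [q.as_sum_range' (n+2) (by omega)]
        simp [C_mul_X_pow_eq_monomial]
      have h3 : (∑ i ∈ Finset.range (n+2), C (q.coeff i)) = C (q.eval 1) := by
        rw [← map_sum, hsum1]
      rw [h2, h3, hev1, map_zero, sub_zero]
    calc ∑ i ∈ Finset.range (n+2), (fun i => q.coeff i) i • (∑ l ∈ Finset.range i, A ^ l)
        = ∑ i ∈ Finset.range (n+2), (aeval A) (C (q.coeff i) * (∑ l ∈ Finset.range i, (X:ℝ[X]) ^ l)) := by
          apply Finset.sum_congr rfl
          intro i _
          rw [_root_.map_mul, aeval_C, map_sum, ← Algebra.smul_def]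
          simp
      _ = (aeval A) (∑ i ∈ Finset.range (n+2), C (q.coeff i) * (∑ l ∈ Finset.range i, (X:ℝ[X]) ^ l)) :=
          (map_sum _ _ _).symm
      _ = 0 := by rw [key]; exact hp0

lemma affine_sol {n : ℕ} (A : Matrix (Fin n) (Fin n) ℝ) (x v : ℕ → Fin n → ℝ) (Lim : ℕ)
    (hx : ∀ k, k < Lim → x (k+1) = A *ᵥ x k + v k) :
    ∀ k, k ≤ Lim → x k = (A ^ k) *ᵥ x 0 + ∑ l ∈ Finset.range k, (A ^ (k - 1 - l)) *ᵥ v l := by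
  intro k
  induction k with
  | zero => intro _; simp
  | succ k ih =>
    intro hk
    rw [hx k (by omega), ih (by omega)]
    rw [Finset.sum_range_succ]
    have h1 : ∀ w : Fin n → ℝ, A *ᵥ ((A ^ k) *ᵥ w) = (A ^ (k+1)) *ᵥ w := by
      intro w; rw [Matrix.mulVec_mulVec, ← pow_succ']
    have h2 : A *ᵥ (∑ l ∈ Finset.range k, (A ^ (k - 1 - l)) *ᵥ v l)
        = ∑ l ∈ Finset.range k, (A ^ (k - l)) *ᵥ v l := by
      rw [show A *ᵥ (∑ l ∈ Finset.range k, (A ^ (k - 1 - l)) *ᵥ v l)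
          = A.mulVecLin (∑ l ∈ Finset.range k, (A ^ (k - 1 - l)) *ᵥ v l) from rfl,
        map_sum]
      apply Finset.sum_congr rfl
      intro l hl
      rw [Finset.mem_range] at hl
      show A *ᵥ ((A ^ (k - 1 - l)) *ᵥ v l) = _
      rw [Matrix.mulVec_mulVec, ← pow_succ', show k - 1 - l + 1 = k - l from by omega]
    rw [Matrix.mulVec_add, h1, h2]
    have h3 : ∀ l ∈ Finset.range k, (A ^ (k - l)) *ᵥ v l = (A ^ (k + 1 - 1 - l)) *ᵥ v l := by
      intro l hl; rw [show k - l = k + 1 - 1 - l from by omega]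
    rw [Finset.sum_congr rfl h3]
    have h4 : (A ^ (k + 1 - 1 - k)) *ᵥ v k = v k := by
      simp
    rw [h4]
    abel

lemma mulVec_snocCols {n m : ℕ} (Bb : Matrix (Fin n) (Fin m) ℝ) (H : Fin n → ℝ)
    (u : Fin m → ℝ) (e : ℝ) :
    (Matrix.of fun i => Fin.snoc (Bb i) (H i)) *ᵥ (Fin.snoc u e) = Bb *ᵥ u + e • H := by
  ext i
  simp only [Matrix.mulVec, dotProduct, Matrix.of_apply, Fin.sum_univ_castSucc,
    Fin.snoc_castSucc, Fin.snoc_last, Pi.add_apply, Pi.smul_apply, smul_eq_mul]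
  ring

lemma sum_shift {Mx i : ℕ} (h : i ≤ Mx) (f : ℕ → ℝ) :
    ∑ s ∈ Finset.range Mx, (if i ≤ s then f s else 0)
      = ∑ k ∈ Finset.range (Mx - i), f (i + k) := by
  rw [← Finset.sum_filter]
  have h2 : (Finset.range Mx).filter (fun s => i ≤ s) = Finset.Ico i Mx := by
    ext s; simp; omega
  rw [h2, Finset.sum_Ico_eq_sum_range]

lemma sum_range_ite_lt {Mx i : ℕ} (h : i ≤ Mx) (g : ℕ → ℝ) :
    ∑ s ∈ Finset.range Mx, (if s < i then g s else 0) = ∑ s ∈ Finset.range i, g s := by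
  rw [← Finset.sum_filter]
  congr 1
  ext s; simp; omega

lemma sum_smul_mulVec {N : ℕ} (a : ℕ → ℝ) (F : ℕ → Matrix (Fin N) (Fin N) ℝ) (S : Finset ℕ)
    (v : Fin N → ℝ) (q : Fin N) :
    ∑ i ∈ S, a i * ((F i) *ᵥ v) q = ((∑ i ∈ S, a i • F i) *ᵥ v) q := by
  simp only [Matrix.mulVec, dotProduct, Finset.mul_sum, Matrix.sum_apply,
    Matrix.smul_apply, smul_eq_mul, Finset.sum_mul]
  rw [Finset.sum_comm]
  apply Finset.sum_congr rfl
  intro c _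
  apply Finset.sum_congr rfl
  intro i _
  ring

lemma sum_mulVec_apply {N : ℕ} (F : ℕ → Matrix (Fin N) (Fin N) ℝ) (S : Finset ℕ)
    (v : Fin N → ℝ) (q : Fin N) :
    ∑ i ∈ S, ((F i) *ᵥ v) q = ((∑ i ∈ S, F i) *ᵥ v) q := by
  have := sum_smul_mulVec (fun _ => 1) F S v q
  simpa using this

lemma mulVec_sum_comm {N q : ℕ} {α : Type} [Fintype α] (M : Matrix (Fin N) (Fin q) ℝ)
    (c : α → ℝ) (v : α → Fin q → ℝ) (i : Fin N) :
    ∑ j : α, c j * (M *ᵥ v j) i = (M *ᵥ (fun r => ∑ j : α, c j * v j r)) i := by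
  simp only [Matrix.mulVec, dotProduct, Finset.mul_sum]
  rw [Finset.sum_comm]
  apply Finset.sum_congr rfl
  intro r _
  apply Finset.sum_congr rfl
  intro j _
  ring

end Aux


/-- The block Hankel matrix of depth `k` of a signal `ω : {0,…,T−1} → ℝ^q`:
its `(i,j)` block entry (for `i < k`, `j < T−k+1`) is the vector `ω(i+j) ∈ ℝ^q`. -/
noncomputable def hankelMat {q : ℕ} (T : ℕ) (ω : Fin T → Fin q → ℝ) (k : ℕ) :
    Matrix (Fin k × Fin q) (Fin (T - k + 1)) ℝ := fun r c =>
  if h : (r.1 : ℕ) + (c : ℕ) < T then ω ⟨(r.1 : ℕ) + (c : ℕ), h⟩ r.2 else 0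

/-- A signal is Hankel exciting of order `k` if its depth-`k` block Hankel matrix
has full row rank `q·k`. -/
def HankelExciting {q : ℕ} (T : ℕ) (ω : Fin T → Fin q → ℝ) (k : ℕ) : Prop :=
  (hankelMat T ω k).rank = q * k

/-- The controllability matrix `[B, AB, …, A^{n−1}B]`. -/
noncomputable def ctrbMat {n : ℕ} {ι : Type} [Fintype ι]
    (A : Matrix (Fin n) (Fin n) ℝ) (B : Matrix (Fin n) ι ℝ) :
    Matrix (Fin n) (Fin n × ι) ℝ :=
  Matrix.of fun i p => (A ^ (p.1 : ℕ) * B) i p.2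

/-- The pair `(A, B)` is controllable if the controllability matrix has rank `n`. -/
def Controllable {n : ℕ} {ι : Type} [Fintype ι]
    (A : Matrix (Fin n) (Fin n) ℝ) (B : Matrix (Fin n) ι ℝ) : Prop :=
  (ctrbMat A B).rank = n

/-- `(ū, ε, ȳ)` is a length-`L` trajectory of the affine system
`x(k+1) = A x(k) + B̄ ū(k) + H ε(k) + L̄`, `ȳ(k) = C̄ x(k) + L_y`. -/
def IsAffTraj {n m p : ℕ} (A : Matrix (Fin n) (Fin n) ℝ) (Bb : Matrix (Fin n) (Fin m) ℝ)
    (H : Fin n → ℝ) (Cb : Matrix (Fin p) (Fin n) ℝ) (Lb : Fin n → ℝ) (Ly : Fin p → ℝ)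
    (L : ℕ) (u : Fin L → Fin m → ℝ) (ε : Fin L → ℝ) (y : Fin L → Fin p → ℝ) : Prop :=
  ∃ x : Fin (L + 1) → Fin n → ℝ,
    ∀ k : Fin L,
      x k.succ = A *ᵥ x k.castSucc + Bb *ᵥ u k + ε k • H + Lb ∧
      y k = Cb *ᵥ x k.castSucc + Ly

/-- `col(u)`: the column vector obtained by stacking `u(0), …, u(L−1)`. -/
def colVec {L q : ℕ} (u : Fin L → Fin q → ℝ) : Fin L × Fin q → ℝ := fun r => u r.1 r.2

/-- non-parametric representation of the affinely masked system,
Hankel matrix structure. If `(A, [B̄ H])` is controllable, `(ū^d, ε^d, ȳ^d)` is a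
length-`T` trajectory of the affine system, `1 ≤ L`, and the combined input `û^d`
(stacking `ū^d(k)` and `ε^d(k)`) is Hankel exciting of order `L + n + 1`, then every
length-`L` trajectory `(ū, ε, ȳ)` of the system satisfies `𝓗_L(ū^d) ḡ = col(ū)`,
`𝓗_L(ε^d) ḡ = col(ε)`, `𝓗_L(ȳ^d) ḡ = col(ȳ)` and `1ᵀ ḡ = 1` for some
`ḡ ∈ ℝ^{T−L+1}`. -/
theorem stmt2 {n m p T : ℕ}
    (A : Matrix (Fin n) (Fin n) ℝ) (Bb : Matrix (Fin n) (Fin m) ℝ)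
    (H : Fin n → ℝ) (Cb : Matrix (Fin p) (Fin n) ℝ) (Lb : Fin n → ℝ) (Ly : Fin p → ℝ)
    (hctrb : Controllable A (Matrix.fromCols Bb (Matrix.of fun i (_ : Fin 1) => H i)))
    (ud : Fin T → Fin m → ℝ) (εd : Fin T → ℝ) (yd : Fin T → Fin p → ℝ)
    (hd : IsAffTraj A Bb H Cb Lb Ly T ud εd yd)
    (L : ℕ) (hL : 1 ≤ L)
    (hexc : HankelExciting T (fun t => Fin.snoc (ud t) (εd t)) (L + n + 1)) :
    ∀ (u : Fin L → Fin m → ℝ) (ε : Fin L → ℝ) (y : Fin L → Fin p → ℝ),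
      IsAffTraj A Bb H Cb Lb Ly L u ε y →
      ∃ g : Fin (T - L + 1) → ℝ,
        hankelMat T ud L *ᵥ g = colVec u ∧
        hankelMat T (fun t (_ : Fin 1) => εd t) L *ᵥ g = colVec (fun k (_ : Fin 1) => ε k) ∧
        hankelMat T yd L *ᵥ g = colVec y ∧
        ∑ j, g j = 1 := by
  intro u ε y htraj
  classical
  obtain ⟨xT, hxT⟩ := hd
  obtain ⟨xL, hxL⟩ := htraj
  set Udf : Fin T → Fin (m+1) → ℝ := fun t => Fin.snoc (ud t) (εd t) with hUdf
  set Bh : Matrix (Fin n) (Fin (m+1)) ℝ := Matrix.of fun i => Fin.snoc (Bb i) (H i) with hBh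
  set Ud : ℕ → Fin (m+1) → ℝ := (fun t => if h : t < T then Udf ⟨t, h⟩ else 0) with hUd
  set xdN : ℕ → Fin n → ℝ := (fun t => if h : t < T + 1 then xT ⟨t, h⟩ else 0) with hxdN
  set xLN : ℕ → Fin n → ℝ := (fun t => if h : t < L + 1 then xL ⟨t, h⟩ else 0) with hxLN
  have hexc' : (hankelMat T Udf (L+n+1)).rank = (m+1) * (L+n+1) := hexc
  have hT : L + n + 2 ≤ T := by
    have h1 := Matrix.rank_le_card_width (hankelMat T Udf (L+n+1))
    rw [hexc'] at h1
    simp only [Fintype.card_fin] at h1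
    have h2 : L+n+1 ≤ (m+1) * (L+n+1) := Nat.le_mul_of_pos_left _ (Nat.succ_pos m)
    omega
  have hPE : ∀ ζ : Fin (L+n+1) × Fin (m+1) → ℝ,
      ζ ᵥ* hankelMat T Udf (L+n+1) = 0 → ζ = 0 := by
    intro ζ hv
    have hcard : (hankelMat T Udf (L+n+1)).rank
        = Fintype.card (Fin (L+n+1) × Fin (m+1)) := by
      rw [hexc']; simp [Fintype.card_prod]; ring
    exact surj_vecMul_zero _ (full_row_rank_surj _ hcard) hv
  have hUval : ∀ (t : ℕ) (h : t < T), Ud t = Fin.snoc (ud ⟨t, h⟩) (εd ⟨t, h⟩) := by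
    intro t h
    rw [hUd]
    simp only [dif_pos h]
    rfl
  have hstep : ∀ t, t < T → xdN (t+1) = A *ᵥ xdN t + Bh *ᵥ Ud t + Lb := by
    intro t ht
    have h1 := (hxT ⟨t, ht⟩).1
    have e1 : xdN (t+1) = xT (Fin.succ ⟨t, ht⟩) := by
      rw [hxdN]
      simp only [dif_pos (show t+1 < T+1 by omega)]
      congr 1
    have e2 : xdN t = xT (Fin.castSucc ⟨t, ht⟩) := by
      rw [hxdN]
      simp only [dif_pos (show t < T+1 by omega)]
      congr 1
    rw [e1, e2, h1, hUval t ht, hBh, mulVec_snocCols]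
    abel
  have hydN : ∀ (t : ℕ) (ht : t < T), yd ⟨t, ht⟩ = Cb *ᵥ xdN t + Ly := by
    intro t ht
    have h2 := (hxT ⟨t, ht⟩).2
    have e2 : xdN t = xT (Fin.castSucc ⟨t, ht⟩) := by
      rw [hxdN]
      simp only [dif_pos (show t < T+1 by omega)]
      congr 1
    rw [h2, e2]
  have hwin : ∀ jn i, jn + i ≤ T →
      xdN (jn+i) = (A ^ i) *ᵥ xdN jn
        + ∑ l ∈ Finset.range i, (A ^ (i-1-l)) *ᵥ (Bh *ᵥ Ud (jn+l) + Lb) := by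
    intro jn i hji
    exact affine_sol A (fun k => xdN (jn+k)) (fun k => Bh *ᵥ Ud (jn+k) + Lb) i
      (fun k hk => by
        have hs := hstep (jn+k) (by omega)
        show xdN ((jn+k)+1) = _
        rw [hs, add_assoc]) i le_rfl
  have hHbig : ∀ (r : Fin (L+n+1) × Fin (m+1)) (c : Fin (T-(L+n+1)+1)),
      hankelMat T Udf (L+n+1) r c = Ud ((r.1 : ℕ) + (c : ℕ)) r.2 := by
    intro r c
    have h1 : (r.1:ℕ) + (c:ℕ) < T := by
      have := r.1.isLt; have := c.isLt; omega
    simp only [hankelMat, dif_pos h1]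
    rw [hUd]
    simp only [dif_pos h1]
  have hHL : ∀ (r : Fin L × Fin (m+1)) (c : Fin (T-L+1)),
      hankelMat T Udf L r c = Ud ((r.1 : ℕ) + (c : ℕ)) r.2 := by
    intro r c
    have h1 : (r.1:ℕ) + (c:ℕ) < T := by
      have := r.1.isLt; have := c.isLt; omega
    simp only [hankelMat, dif_pos h1]
    rw [hUd]
    simp only [dif_pos h1]
  obtain ⟨a, ha1, haA, haSum, haGeom⟩ := poly_facts A
  set Φ : Matrix ((Fin L × Fin (m+1)) ⊕ (Fin n ⊕ Fin 1)) (Fin (T-L+1)) ℝ :=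
    Matrix.of (fun r c => Sum.elim (fun rk => hankelMat T Udf L rk c)
      (Sum.elim (fun i => xdN (c:ℕ) i) (fun _ => (1:ℝ))) r) with hΦ
  have hker : ∀ ζ : ((Fin L × Fin (m+1)) ⊕ (Fin n ⊕ Fin 1)) → ℝ, ζ ᵥ* Φ = 0 → ζ = 0 := by
    intro ζ hζ
    set η : ℕ → Fin (m+1) → ℝ :=
      (fun k ρ => if h : k < L then ζ (Sum.inl (⟨k, h⟩, ρ)) else 0) with hη
    set ξ : Fin n → ℝ := (fun i => ζ (Sum.inr (Sum.inl i))) with hξ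
    set c0 : ℝ := ζ (Sum.inr (Sum.inr 0)) with hc0
    have hrel : ∀ t, t ≤ T - L →
        (∑ k ∈ Finset.range L, ∑ ρ, η k ρ * Ud (k+t) ρ)
          + ((∑ i, ξ i * xdN t i) + c0) = 0 := by
      intro t ht
      have hc : t < T - L + 1 := by omega
      have hcol := congrFun hζ ⟨t, hc⟩
      simp only [Matrix.vecMul, dotProduct, Pi.zero_apply] at hcol
      rw [Fintype.sum_sum_type, Fintype.sum_sum_type, Fintype.sum_prod_type] at hcol
      have eA : (∑ k : Fin L, ∑ ρ : Fin (m+1),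
          ζ (Sum.inl (k, ρ)) * Φ (Sum.inl (k, ρ)) ⟨t, hc⟩)
            = ∑ k ∈ Finset.range L, ∑ ρ, η k ρ * Ud (k+t) ρ := by
        rw [← Fin.sum_univ_eq_sum_range (fun kk => ∑ ρ, η kk ρ * Ud (kk+t) ρ) L]
        apply Finset.sum_congr rfl
        intro k _
        apply Finset.sum_congr rfl
        intro ρ _
        have hΦe : Φ (Sum.inl (k, ρ)) ⟨t, hc⟩ = Ud ((k:ℕ)+t) ρ := by
          rw [hΦ]
          simp only [Matrix.of_apply, Sum.elim_inl]
          exact hHL (k, ρ) ⟨t, hc⟩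
        have hζe : ζ (Sum.inl (k, ρ)) = η (k:ℕ) ρ := by
          rw [hη]
          simp only [dif_pos k.isLt, Fin.eta]
        rw [hΦe, hζe]
      have eB : (∑ i : Fin n, ζ (Sum.inr (Sum.inl i)) * Φ (Sum.inr (Sum.inl i)) ⟨t, hc⟩)
          = ∑ i, ξ i * xdN t i := by
        apply Finset.sum_congr rfl
        intro i _
        have hΦe : Φ (Sum.inr (Sum.inl i)) ⟨t, hc⟩ = xdN t i := by
          rw [hΦ]; simp only [Matrix.of_apply, Sum.elim_inr, Sum.elim_inl]
        rw [hΦe, hξ]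
      have eC : (∑ w : Fin 1, ζ (Sum.inr (Sum.inr w)) * Φ (Sum.inr (Sum.inr w)) ⟨t, hc⟩)
          = c0 := by
        rw [Fin.sum_univ_one]
        have hΦe : Φ (Sum.inr (Sum.inr 0)) ⟨t, hc⟩ = 1 := by
          rw [hΦ]; simp only [Matrix.of_apply, Sum.elim_inr]
        rw [hΦe, mul_one, hc0]
      rw [eA, eB, eC] at hcol
      exact hcol
    set zf : ℕ → Fin (m+1) → ℝ := (fun s ρ =>
      ∑ i ∈ Finset.range (n+2), a i * ((if i ≤ s then η (s-i) ρ else 0)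
        + (if s < i then (ξ ᵥ* (A ^ (i-1-s) * Bh)) ρ else 0))) with hzf
    have hζ2 : (fun r : Fin (L+n+1) × Fin (m+1) => zf (r.1:ℕ) r.2)
        ᵥ* hankelMat T Udf (L+n+1) = 0 := by
      funext j
      have hjT : (j:ℕ) + (L+n+1) ≤ T := by have := j.isLt; omega
      simp only [Matrix.vecMul, dotProduct, Pi.zero_apply]
      rw [Fintype.sum_prod_type]
      have hent : ∀ (s : Fin (L+n+1)) (ρ : Fin (m+1)),
          zf (s:ℕ) ρ * hankelMat T Udf (L+n+1) (s,ρ) j = zf (s:ℕ) ρ * Ud ((s:ℕ)+(j:ℕ)) ρ := by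
        intro s ρ
        rw [hHbig (s,ρ) j]
      have e0 : (∑ s : Fin (L+n+1), ∑ ρ : Fin (m+1),
          zf (s:ℕ) ρ * hankelMat T Udf (L+n+1) (s,ρ) j)
            = ∑ s ∈ Finset.range (L+n+1), ∑ ρ, zf s ρ * Ud (s+(j:ℕ)) ρ := by
        rw [← Fin.sum_univ_eq_sum_range (fun ss => ∑ ρ, zf ss ρ * Ud (ss+(j:ℕ)) ρ) (L+n+1)]
        apply Finset.sum_congr rfl
        intro s _
        apply Finset.sum_congr rfl
        intro ρ _
        exact hent s ρ
      rw [e0]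
      set W : ℕ → ℝ := (fun i => ∑ k ∈ Finset.range L, ∑ ρ, η k ρ * Ud (i+k+(j:ℕ)) ρ) with hW
      set V : ℕ → ℝ := (fun i => ∑ l ∈ Finset.range i, ∑ ρ,
        (ξ ᵥ* (A ^ (i-1-l) * Bh)) ρ * Ud (l+(j:ℕ)) ρ) with hV
      have stepI : ∑ s ∈ Finset.range (L+n+1), ∑ ρ, zf s ρ * Ud (s+(j:ℕ)) ρ
          = ∑ i ∈ Finset.range (n+2), (a i * W i + a i * V i) := by
        have e1 : ∀ s ∈ Finset.range (L+n+1), (∑ ρ, zf s ρ * Ud (s+(j:ℕ)) ρ)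
            = ∑ i ∈ Finset.range (n+2),
              ((if i ≤ s then a i * ∑ ρ, η (s-i) ρ * Ud (s+(j:ℕ)) ρ else 0)
                + (if s < i then a i * ∑ ρ, (ξ ᵥ* (A ^ (i-1-s) * Bh)) ρ * Ud (s+(j:ℕ)) ρ else 0)) := by
          intro s _
          have e2 : ∀ ρ : Fin (m+1), zf s ρ * Ud (s+(j:ℕ)) ρ
              = ∑ i ∈ Finset.range (n+2),
                ((if i ≤ s then a i * (η (s-i) ρ * Ud (s+(j:ℕ)) ρ) else 0)
                  + (if s < i then a i * ((ξ ᵥ* (A ^ (i-1-s) * Bh)) ρ * Ud (s+(j:ℕ)) ρ) else 0)) := by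
            intro ρ
            rw [hzf]
            simp only []
            rw [Finset.sum_mul]
            apply Finset.sum_congr rfl
            intro i _
            split_ifs <;> ring
          rw [Finset.sum_congr rfl (fun ρ _ => e2 ρ), Finset.sum_comm]
          apply Finset.sum_congr rfl
          intro i _
          rw [Finset.sum_add_distrib]
          congr 1
          · split_ifs with h
            · rw [Finset.mul_sum]
            · exact Finset.sum_const_zero
          · split_ifs with h
            · rw [Finset.mul_sum]
            · exact Finset.sum_const_zero
        rw [Finset.sum_congr rfl e1, Finset.sum_comm]
        apply Finset.sum_congr rfl
        intro i hi
        rw [Finset.mem_range] at hi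
        rw [Finset.sum_add_distrib]
        congr 1
        · rw [sum_shift (show i ≤ L+n+1 by omega)]
          have e3 : ∀ k ∈ Finset.range (L+n+1-i),
              (a i * ∑ ρ, η (i+k-i) ρ * Ud ((i+k)+(j:ℕ)) ρ)
                = a i * ∑ ρ, η k ρ * Ud (i+k+(j:ℕ)) ρ := by
            intro k _
            rw [Nat.add_sub_cancel_left]
          rw [Finset.sum_congr rfl e3]
          rw [← Finset.sum_subset (Finset.range_subset_range.mpr (show L ≤ L+n+1-i by omega))
            (fun k _ hk => by
              have hkL : ¬ k < L := fun hcon => hk (Finset.mem_range.mpr hcon)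
              have hz : ∀ ρ : Fin (m+1), η k ρ = 0 := by
                intro ρ; rw [hη]; exact dif_neg hkL
              simp [hz])]
          rw [← Finset.mul_sum, hW]
        · rw [sum_range_ite_lt (show i ≤ L+n+1 by omega), ← Finset.mul_sum, hV]
      rw [stepI]
      have hWalt : ∀ i, (∑ k ∈ Finset.range L, ∑ ρ, η k ρ * Ud (k+((j:ℕ)+i)) ρ) = W i := by
        intro i
        rw [hW]
        apply Finset.sum_congr rfl
        intro k _
        apply Finset.sum_congr rfl
        intro ρ _
        rw [show k+((j:ℕ)+i) = i+k+(j:ℕ) from by omega]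
      have hXiexp : ∀ i, i < n+2 → (∑ q, ξ q * xdN ((j:ℕ)+i) q)
          = (∑ q, ξ q * ((A^i) *ᵥ xdN (j:ℕ)) q) + (V i
            + (∑ q, ξ q * (((∑ l ∈ Finset.range i, A^(i-1-l))) *ᵥ Lb) q)) := by
        intro i hi
        rw [hwin (j:ℕ) i (by omega)]
        simp only [Pi.add_apply, Finset.sum_apply, mul_add, Finset.mul_sum]
        rw [Finset.sum_add_distrib]
        congr 1
        rw [Finset.sum_comm]
        have hterm : ∀ l ∈ Finset.range i,
            (∑ q, ξ q * ((A^(i-1-l)) *ᵥ (Bh *ᵥ Ud ((j:ℕ)+l) + Lb)) q)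
              = (∑ ρ, (ξ ᵥ* (A^(i-1-l) * Bh)) ρ * Ud (l+(j:ℕ)) ρ)
                + (∑ q, ξ q * ((A^(i-1-l)) *ᵥ Lb) q) := by
          intro l _
          rw [Matrix.mulVec_add]
          simp only [Pi.add_apply, mul_add]
          rw [Finset.sum_add_distrib]
          congr 1
          rw [show (j:ℕ) + l = l + (j:ℕ) from by omega]
          rw [Matrix.mulVec_mulVec]
          have hdp := Matrix.dotProduct_mulVec ξ (A^(i-1-l) * Bh) (Ud (l+(j:ℕ)))
          simpa [dotProduct] using hdp
        rw [Finset.sum_congr rfl hterm, Finset.sum_add_distrib]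
        congr 1
        rw [Finset.sum_comm]
        apply Finset.sum_congr rfl
        intro q _
        rw [← Finset.mul_sum, sum_mulVec_apply]
      have hsplit : ∀ i ∈ Finset.range (n+2), a i * (W i + V i)
          = a i * ((∑ k ∈ Finset.range L, ∑ ρ, η k ρ * Ud (k+((j:ℕ)+i)) ρ)
              + ((∑ q, ξ q * xdN ((j:ℕ)+i) q) + c0))
            - a i * (∑ q, ξ q * ((A^i) *ᵥ xdN (j:ℕ)) q)
            - a i * (∑ q, ξ q * (((∑ l ∈ Finset.range i, A^(i-1-l))) *ᵥ Lb) q)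
            - a i * c0 := by
        intro i hi
        rw [Finset.mem_range] at hi
        rw [hXiexp i hi, hWalt i]
        ring
      have e4 : ∀ i ∈ Finset.range (n+2), a i * W i + a i * V i = a i * (W i + V i) := by
        intro i _; ring
      rw [Finset.sum_congr rfl e4, Finset.sum_congr rfl hsplit]
      rw [Finset.sum_sub_distrib, Finset.sum_sub_distrib, Finset.sum_sub_distrib]
      have hz1 : ∑ i ∈ Finset.range (n+2),
          a i * ((∑ k ∈ Finset.range L, ∑ ρ, η k ρ * Ud (k+((j:ℕ)+i)) ρ)
            + ((∑ q, ξ q * xdN ((j:ℕ)+i) q) + c0)) = 0 := by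
        apply Finset.sum_eq_zero
        intro i hi
        rw [Finset.mem_range] at hi
        rw [hrel ((j:ℕ)+i) (by omega), mul_zero]
      have hz2 : ∑ i ∈ Finset.range (n+2), a i * (∑ q, ξ q * ((A^i) *ᵥ xdN (j:ℕ)) q) = 0 := by
        have e5 : ∀ i ∈ Finset.range (n+2),
            a i * (∑ q, ξ q * ((A^i) *ᵥ xdN (j:ℕ)) q)
              = ∑ q, ξ q * (a i * ((A^i) *ᵥ xdN (j:ℕ)) q) := by
          intro i _
          rw [Finset.mul_sum]
          apply Finset.sum_congr rfl
          intro q _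
          ring
        rw [Finset.sum_congr rfl e5, Finset.sum_comm]
        apply Finset.sum_eq_zero
        intro q _
        rw [← Finset.mul_sum, sum_smul_mulVec, haA]
        simp
      have hz3 : ∑ i ∈ Finset.range (n+2),
          a i * (∑ q, ξ q * (((∑ l ∈ Finset.range i, A^(i-1-l))) *ᵥ Lb) q) = 0 := by
        have e5 : ∀ i ∈ Finset.range (n+2),
            a i * (∑ q, ξ q * (((∑ l ∈ Finset.range i, A^(i-1-l))) *ᵥ Lb) q)
              = ∑ q, ξ q * (a i * (((∑ l ∈ Finset.range i, A^(i-1-l))) *ᵥ Lb) q) := by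
          intro i _
          rw [Finset.mul_sum]
          apply Finset.sum_congr rfl
          intro q _
          ring
        rw [Finset.sum_congr rfl e5, Finset.sum_comm]
        apply Finset.sum_eq_zero
        intro q _
        rw [← Finset.mul_sum, sum_smul_mulVec]
        have e6 : (∑ i ∈ Finset.range (n+2), a i • (∑ l ∈ Finset.range i, A^(i-1-l)))
            = ∑ i ∈ Finset.range (n+2), a i • (∑ l ∈ Finset.range i, A^l) := by
          apply Finset.sum_congr rfl
          intro i _
          rw [Finset.sum_range_reflect (fun l => A^l) i]
        rw [e6, haGeom]
        simp
      have hz4 : ∑ i ∈ Finset.range (n+2), a i * c0 = 0 := by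
        rw [← Finset.sum_mul, haSum, zero_mul]
      rw [hz1, hz2, hz3, hz4]
      ring
    have hzz := hPE _ hζ2
    have hz' : ∀ s, s < L+n+1 → ∀ ρ, zf s ρ = 0 := by
      intro s hs ρ
      have := congrFun hzz (⟨s, hs⟩, ρ)
      simpa using this
    have hηz : ∀ k (ρ : Fin (m+1)), η k ρ = 0 := by
      have hA : ∀ d, d < L → ∀ ρ, η (L-1-d) ρ = 0 := by
        intro d
        induction d using Nat.strong_induction_on with
        | _ d IH =>
          intro hd ρ
          have hs : L+n-d < L+n+1 := by omega
          have h0 := hz' (L+n-d) hs ρ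
          rw [hzf] at h0
          simp only [] at h0
          have htr : ∀ i ∈ Finset.range (n+2),
              a i * ((if i ≤ L+n-d then η (L+n-d-i) ρ else 0)
                + (if L+n-d < i then (ξ ᵥ* (A ^ (i-1-(L+n-d)) * Bh)) ρ else 0))
                = a i * η (L+n-d-i) ρ := by
            intro i hi
            rw [Finset.mem_range] at hi
            rw [if_pos (by omega), if_neg (by omega), add_zero]
          rw [Finset.sum_congr rfl htr, Finset.sum_range_succ] at h0
          have hvanish : ∀ i ∈ Finset.range (n+1), a i * η (L+n-d-i) ρ = 0 := by
            intro i hi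
            rw [Finset.mem_range] at hi
            by_cases hc : L+n-d-i < L
            · have hlt : L-1-(L+n-d-i) < d := by omega
              have heq : L+n-d-i = L-1-(L-1-(L+n-d-i)) := by omega
              rw [heq, IH _ hlt (by omega) ρ, mul_zero]
            · have hz0 : η (L+n-d-i) ρ = 0 := by
                rw [hη]; exact dif_neg hc
              rw [hz0, mul_zero]
          rw [Finset.sum_eq_zero hvanish, zero_add, ha1, one_mul,
            show L+n-d-(n+1) = L-1-d from by omega] at h0
          exact h0
      intro k ρ
      by_cases hk : k < L
      · have := hA (L-1-k) (by omega) ρ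
        rw [show L-1-(L-1-k) = k from by omega] at this
        exact this
      · rw [hη]; exact dif_neg hk
    have hxB : ∀ e, e ≤ n → ξ ᵥ* (A^e * Bh) = 0 := by
      intro e
      induction e using Nat.strong_induction_on with
      | _ e IH =>
        intro he
        funext ρ
        have hs : n - e < L+n+1 := by omega
        have h0 := hz' (n-e) hs ρ
        rw [hzf] at h0
        simp only [] at h0
        have htr : ∀ i ∈ Finset.range (n+2),
            a i * ((if i ≤ n-e then η (n-e-i) ρ else 0)
              + (if n-e < i then (ξ ᵥ* (A ^ (i-1-(n-e)) * Bh)) ρ else 0))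
              = (if n-e+1 ≤ i then a i * (ξ ᵥ* (A ^ (i-1-(n-e)) * Bh)) ρ else 0) := by
          intro i hi
          have h1 : (if i ≤ n-e then η (n-e-i) ρ else 0) = 0 := by
            split_ifs
            · exact hηz _ _
            · rfl
          rw [h1, zero_add]
          by_cases h2 : n-e < i
          · rw [if_pos h2, if_pos (by omega)]
          · rw [if_neg h2, if_neg (by omega), mul_zero]
        rw [Finset.sum_congr rfl htr, sum_shift (show n-e+1 ≤ n+2 by omega)] at h0
        have he2 : n+2-(n-e+1) = e+1 := by omega
        rw [he2] at h0
        have htr2 : ∀ k ∈ Finset.range (e+1),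
            a (n-e+1+k) * (ξ ᵥ* (A ^ (n-e+1+k-1-(n-e)) * Bh)) ρ
              = a (n-e+1+k) * (ξ ᵥ* (A ^ k * Bh)) ρ := by
          intro k _
          rw [show n-e+1+k-1-(n-e) = k from by omega]
        rw [Finset.sum_congr rfl htr2, Finset.sum_range_succ] at h0
        have hvan : ∀ k ∈ Finset.range e, a (n-e+1+k) * (ξ ᵥ* (A ^ k * Bh)) ρ = 0 := by
          intro k hk
          rw [Finset.mem_range] at hk
          rw [IH k (by omega) (by omega)]
          simp
        rw [Finset.sum_eq_zero hvan, zero_add,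
          show n-e+1+e = n+1 from by omega, ha1, one_mul] at h0
        exact h0
    have hξz : ξ = 0 := by
      have hctrb' : (ctrbMat A (Matrix.fromCols Bb (Matrix.of fun i (_ : Fin 1) => H i))).rank
          = Fintype.card (Fin n) := by
        have : (ctrbMat A (Matrix.fromCols Bb (Matrix.of fun i (_ : Fin 1) => H i))).rank = n :=
          hctrb
        rw [this, Fintype.card_fin]
      apply surj_vecMul_zero _ (full_row_rank_surj _ hctrb')
      funext pr
      obtain ⟨p1, w⟩ := pr
      cases w with
      | inl r =>
        have hx := congrFun (hxB (p1:ℕ) (by omega)) (Fin.castSucc r)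
        simp only [Matrix.vecMul, dotProduct, Pi.zero_apply] at hx ⊢
        rw [← hx]
        apply Finset.sum_congr rfl
        intro i _
        congr 1
        rw [ctrbMat, Matrix.of_apply]
        simp only [Matrix.mul_apply, Matrix.fromCols_apply_inl, hBh,
          Matrix.of_apply, Fin.snoc_castSucc]
      | inr o =>
        have hx := congrFun (hxB (p1:ℕ) (by omega)) (Fin.last m)
        simp only [Matrix.vecMul, dotProduct, Pi.zero_apply] at hx ⊢
        rw [← hx]
        apply Finset.sum_congr rfl
        intro i _
        congr 1
        rw [ctrbMat, Matrix.of_apply]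
        simp only [Matrix.mul_apply, Matrix.fromCols_apply_inr, hBh,
          Matrix.of_apply, Fin.snoc_last]
    have hc0z : c0 = 0 := by
      have h0 := hrel 0 (by omega)
      have h1 : ∀ k ∈ Finset.range L, (∑ ρ : Fin (m+1), η k ρ * Ud (k+0) ρ) = 0 := by
        intro k _
        apply Finset.sum_eq_zero
        intro ρ _
        rw [hηz k ρ, zero_mul]
      rw [Finset.sum_eq_zero h1] at h0
      have h2 : (∑ i, ξ i * xdN 0 i) = 0 := by
        apply Finset.sum_eq_zero
        intro i _
        rw [congrFun hξz i]
        simp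
      rw [h2] at h0
      simpa using h0
    funext r
    show ζ r = 0
    cases r with
    | inl rk =>
      obtain ⟨k, ρ⟩ := rk
      have h := hηz (k:ℕ) ρ
      rw [hη] at h
      simp only [dif_pos k.isLt, Fin.eta] at h
      exact h
    | inr w =>
      cases w with
      | inl i => exact congrFun hξz i
      | inr o =>
        rw [show o = 0 from Subsingleton.elim o 0]
        exact hc0z
  have hrank := vecMul_inj_rank Φ hker
  have hsurj := full_row_rank_surj Φ hrank
  obtain ⟨g, hg⟩ := hsurj (fun r => Sum.elim
    (fun rk : Fin L × Fin (m+1) => (Fin.snoc (u rk.1) (ε rk.1) : Fin (m+1) → ℝ) rk.2)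
    (Sum.elim (fun i => xL 0 i) (fun _ => (1:ℝ))) r)
  have hgU : ∀ (k : Fin L) (ρ : Fin (m+1)),
      (∑ c : Fin (T-L+1), Ud ((k:ℕ)+(c:ℕ)) ρ * g c) = (Fin.snoc (u k) (ε k) : Fin (m+1) → ℝ) ρ := by
    intro k ρ
    have h1 := congrFun hg (Sum.inl (k, ρ))
    simp only [Matrix.mulVec, dotProduct, Sum.elim_inl] at h1
    rw [← h1]
    apply Finset.sum_congr rfl
    intro c _
    rw [hΦ]
    simp only [Matrix.of_apply, Sum.elim_inl]
    rw [hHL (k, ρ) c]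
  have hgX : ∀ i, (∑ c : Fin (T-L+1), xdN (c:ℕ) i * g c) = xL 0 i := by
    intro i
    have h1 := congrFun hg (Sum.inr (Sum.inl i))
    simp only [Matrix.mulVec, dotProduct, Sum.elim_inr, Sum.elim_inl] at h1
    rw [← h1]
    apply Finset.sum_congr rfl
    intro c _
    rw [hΦ]
    simp only [Matrix.of_apply, Sum.elim_inr, Sum.elim_inl]
  have hg1 : (∑ c : Fin (T-L+1), g c) = 1 := by
    have h1 := congrFun hg (Sum.inr (Sum.inr 0))
    simp only [Matrix.mulVec, dotProduct, Sum.elim_inr] at h1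
    rw [← h1]
    apply Finset.sum_congr rfl
    intro c _
    rw [hΦ]
    simp only [Matrix.of_apply, Sum.elim_inr]
    ring
  have hstepL : ∀ (k : ℕ) (hk : k < L),
      xLN (k+1) = A *ᵥ xLN k + Bh *ᵥ (Fin.snoc (u ⟨k,hk⟩) (ε ⟨k,hk⟩)) + Lb := by
    intro k hk
    have h1 := (hxL ⟨k, hk⟩).1
    have e1 : xLN (k+1) = xL (Fin.succ ⟨k, hk⟩) := by
      rw [hxLN]
      simp only [dif_pos (show k+1 < L+1 by omega)]
      congr 1
    have e2 : xLN k = xL (Fin.castSucc ⟨k, hk⟩) := by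
      rw [hxLN]
      simp only [dif_pos (show k < L+1 by omega)]
      congr 1
    rw [e1, e2, h1, hBh, mulVec_snocCols]
    abel
  have hcomb : ∀ k', k' ≤ L → ∀ i,
      (∑ c : Fin (T-L+1), xdN ((c:ℕ)+k') i * g c) = xLN k' i := by
    intro k'
    induction k' with
    | zero =>
      intro _ i
      have e1 : xLN 0 = xL 0 := by
        rw [hxLN]
        simp only [dif_pos (show 0 < L+1 by omega)]
        rfl
      rw [e1]
      have := hgX i
      rw [← this]
      apply Finset.sum_congr rfl
      intro c _
      rfl
    | succ k' IH =>
      intro hk i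
      have hk' : k' < L := by omega
      have e1 : ∀ c : Fin (T-L+1), xdN ((c:ℕ)+(k'+1)) i * g c
          = ((A *ᵥ xdN ((c:ℕ)+k')) i + ((Bh *ᵥ Ud ((c:ℕ)+k')) i + Lb i)) * g c := by
        intro c
        have hct : (c:ℕ)+k' < T := by
          have := c.isLt; omega
        have := hstep ((c:ℕ)+k') hct
        rw [show (c:ℕ)+(k'+1) = ((c:ℕ)+k')+1 from by omega, this]
        simp only [Pi.add_apply]
        ring_nf
      rw [Finset.sum_congr rfl (fun c _ => e1 c)]
      have e2 : ∑ c : Fin (T-L+1), ((A *ᵥ xdN ((c:ℕ)+k')) i + ((Bh *ᵥ Ud ((c:ℕ)+k')) i + Lb i)) * g c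
          = (∑ c : Fin (T-L+1), g c * (A *ᵥ xdN ((c:ℕ)+k')) i)
            + ((∑ c : Fin (T-L+1), g c * (Bh *ᵥ Ud ((c:ℕ)+k')) i)
              + (∑ c : Fin (T-L+1), g c) * Lb i) := by
        rw [Finset.sum_mul]
        rw [← Finset.sum_add_distrib, ← Finset.sum_add_distrib]
        apply Finset.sum_congr rfl
        intro c _
        ring
      rw [e2]
      have eA : (∑ c : Fin (T-L+1), g c * (A *ᵥ xdN ((c:ℕ)+k')) i) = (A *ᵥ xLN k') i := by
        rw [mulVec_sum_comm A g (fun c => xdN ((c:ℕ)+k')) i]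
        congr 1
        funext r
        rw [← IH (by omega) r]
        apply Finset.sum_congr rfl
        intro c _
        ring
      have eB : (∑ c : Fin (T-L+1), g c * (Bh *ᵥ Ud ((c:ℕ)+k')) i)
          = (Bh *ᵥ (Fin.snoc (u ⟨k',hk'⟩) (ε ⟨k',hk'⟩))) i := by
        rw [mulVec_sum_comm Bh g (fun c => Ud ((c:ℕ)+k')) i]
        congr 1
        funext ρ
        rw [← hgU ⟨k',hk'⟩ ρ]
        apply Finset.sum_congr rfl
        intro c _
        rw [show (k':ℕ)+(c:ℕ) = (c:ℕ)+k' from by omega]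
        ring
      rw [eA, eB, hg1, one_mul, hstepL k' hk']
      simp only [Pi.add_apply]
      ring
  refine ⟨g, ?_, ?_, ?_, ?_⟩
  · funext r
    obtain ⟨k, ρ⟩ := r
    show (hankelMat T ud L *ᵥ g) (k, ρ) = u k ρ
    have h1 := hgU k (Fin.castSucc ρ)
    rw [Fin.snoc_castSucc] at h1
    rw [← h1]
    simp only [Matrix.mulVec, dotProduct]
    apply Finset.sum_congr rfl
    intro c _
    have hlt : (k:ℕ)+(c:ℕ) < T := by
      have := k.isLt; have := c.isLt; omega
    simp only [hankelMat, dif_pos hlt]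
    rw [hUval _ hlt]
    simp only [Fin.snoc_castSucc]
  · funext r
    obtain ⟨k, ρ⟩ := r
    show (hankelMat T (fun t (_ : Fin 1) => εd t) L *ᵥ g) (k, ρ) = ε k
    have h1 := hgU k (Fin.last m)
    rw [Fin.snoc_last] at h1
    rw [← h1]
    simp only [Matrix.mulVec, dotProduct]
    apply Finset.sum_congr rfl
    intro c _
    have hlt : (k:ℕ)+(c:ℕ) < T := by
      have := k.isLt; have := c.isLt; omega
    simp only [hankelMat, dif_pos hlt]
    rw [hUval _ hlt]
    simp only [Fin.snoc_last]
  · funext r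
    obtain ⟨k, ρ⟩ := r
    show (hankelMat T yd L *ᵥ g) (k, ρ) = y k ρ
    have hyk := (hxL k).2
    have e1 : ∀ c : Fin (T-L+1), hankelMat T yd L (k, ρ) c * g c
        = ((Cb *ᵥ xdN ((c:ℕ)+(k:ℕ))) ρ + Ly ρ) * g c := by
      intro c
      have hlt : (k:ℕ)+(c:ℕ) < T := by
        have := k.isLt; have := c.isLt; omega
      simp only [hankelMat, dif_pos hlt]
      rw [hydN _ hlt]
      simp only [Pi.add_apply]
      rw [show (k:ℕ)+(c:ℕ) = (c:ℕ)+(k:ℕ) from by omega]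
    simp only [Matrix.mulVec, dotProduct]
    rw [Finset.sum_congr rfl (fun c _ => e1 c)]
    have e2 : ∑ c : Fin (T-L+1), ((Cb *ᵥ xdN ((c:ℕ)+(k:ℕ))) ρ + Ly ρ) * g c
        = (∑ c : Fin (T-L+1), g c * (Cb *ᵥ xdN ((c:ℕ)+(k:ℕ))) ρ)
          + (∑ c : Fin (T-L+1), g c) * Ly ρ := by
      rw [Finset.sum_mul, ← Finset.sum_add_distrib]
      apply Finset.sum_congr rfl
      intro c _
      ring
    rw [e2, hg1, one_mul]
    have eA : (∑ c : Fin (T-L+1), g c * (Cb *ᵥ xdN ((c:ℕ)+(k:ℕ))) ρ) = (Cb *ᵥ xLN (k:ℕ)) ρ := by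
      rw [mulVec_sum_comm Cb g (fun c => xdN ((c:ℕ)+(k:ℕ))) ρ]
      congr 1
      funext r
      rw [← hcomb (k:ℕ) (by omega) r]
      apply Finset.sum_congr rfl
      intro c _
      ring
    rw [eA, hyk]
    have e3 : xLN (k:ℕ) = xL (Fin.castSucc k) := by
      rw [hxLN]
      simp only [dif_pos (show (k:ℕ) < L+1 by omega)]
      congr 1
    rw [e3]
    rfl
  · exact hg1
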